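/- For n ≥ 1, the sum Σ_{i=0}^{n} max(C(n−1, i−1), C(n−1, i)) = 2^{n−1} + C(n−1, ⌊(n−1)/2⌋), where C(n−1, −1) = C(n−1, n) = 0. -/

import Mathlib

lemma choose_inc (m k : ℕ) (h : 2 * (k + 1) ≤ m + 1) : m.choose k ≤ m.choose (k + 1) := by
  have hid := Nat.choose_succ_right_eq m k
  have hk : k + 1 ≤ m - k := by omega
  have : m.choose k * (k + 1) ≤ m.choose (k + 1) * (k + 1) := by
    rw [hid]; exact Nat.mul_le_mul_left _ hk
  exact Nat.le_of_mul_le_mul_right this (Nat.succ_pos k)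

lemma choose_dec (m k : ℕ) (h : m + 1 ≤ 2 * (k + 1)) : m.choose (k + 1) ≤ m.choose k := by
  have hid := Nat.choose_succ_right_eq m k
  have hk : m - k ≤ k + 1 := by omega
  have : m.choose (k + 1) * (k + 1) ≤ m.choose k * (k + 1) := by
    rw [hid]; exact Nat.mul_le_mul_left _ hk
  exact Nat.le_of_mul_le_mul_right this (Nat.succ_pos k)

/-- Σ_{i=0}^{n} max(C(n−1, i−1), C(n−1, i)) = 2^{n−1} + C(n−1, ⌊(n−1)/2⌋).
(Here, with natural-number truncated subtraction, the i = 0 term is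
max(C(n−1,0), C(n−1,0)) = C(n−1,0), which coincides with the convention
C(n−1,−1) = 0 since max(0, C(n−1,0)) = C(n−1,0); also C(n−1,n) = 0 holds in ℕ.) -/
theorem stmt3 (n : ℕ) (hn : 1 ≤ n) :
    ∑ i ∈ Finset.range (n + 1), max ((n - 1).choose (i - 1)) ((n - 1).choose i)
      = 2 ^ (n - 1) + (n - 1).choose ((n - 1) / 2) := by
  obtain ⟨m, rfl⟩ : ∃ m, n = m + 1 := ⟨n - 1, by omega⟩
  simp only [Nat.add_sub_cancel]
  set t := (m + 1) / 2 with ht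
  rw [Finset.range_eq_Ico,
    ← Finset.sum_Ico_consecutive _ (by omega : 0 ≤ t + 1) (by omega : t + 1 ≤ m + 1 + 1)]
  have h1 : ∑ j ∈ Finset.Ico 0 (t + 1), max (m.choose (j - 1)) (m.choose j)
      = ∑ j ∈ Finset.Ico 0 (t + 1), m.choose j := by
    refine Finset.sum_congr rfl fun j hj => ?_
    simp only [Finset.mem_Ico] at hj
    rcases j with _ | k
    · simp
    · exact max_eq_right (choose_inc m k (by omega))
  have h2 : ∑ j ∈ Finset.Ico (t + 1) (m + 1 + 1), max (m.choose (j - 1)) (m.choose j)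
      = ∑ j ∈ Finset.Ico t (m + 1), m.choose j := by
    rw [Finset.sum_Ico_eq_sum_range, Finset.sum_Ico_eq_sum_range]
    have hlen : m + 1 + 1 - (t + 1) = m + 1 - t := by omega
    rw [hlen]
    refine Finset.sum_congr rfl fun i hi => ?_
    have : t + 1 + i - 1 = t + i := by omega
    rw [this, show t + 1 + i = t + i + 1 by omega]
    exact max_eq_left (choose_dec m (t + i) (by omega))
  rw [h1, h2]
  have h3 : ∑ j ∈ Finset.Ico 0 (t + 1), m.choose j
      = (∑ j ∈ Finset.Ico 0 t, m.choose j) + m.choose t :=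
    Finset.sum_Ico_succ_top (by omega) _
  rw [h3]
  have h4 : (∑ j ∈ Finset.Ico 0 t, m.choose j) + ∑ j ∈ Finset.Ico t (m + 1), m.choose j
      = ∑ j ∈ Finset.Ico 0 (m + 1), m.choose j :=
    Finset.sum_Ico_consecutive _ (by omega) (by omega)
  have h5 : ∑ j ∈ Finset.Ico 0 (m + 1), m.choose j = 2 ^ m := by
    rw [← Finset.range_eq_Ico]; exact Nat.sum_range_choose m
  have h6 : m.choose t = m.choose (m / 2) := by
    have hle : t ≤ m := by omega
    have := Nat.choose_symm hle
    have hmt : m - t = m / 2 := by omega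
    rw [← this, hmt]
  calc (∑ j ∈ Finset.Ico 0 t, m.choose j) + m.choose t + ∑ j ∈ Finset.Ico t (m + 1), m.choose j
      = ((∑ j ∈ Finset.Ico 0 t, m.choose j) + ∑ j ∈ Finset.Ico t (m + 1), m.choose j)
        + m.choose t := by ring
    _ = 2 ^ m + m.choose (m / 2) := by rw [h4, h5, h6]
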